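/- Let m ≠ 0, ω, h > 0 be real with ω²h² ≠ 8. The matrix Φ₃ = (1/(1 + ω²h²/24))·[[1 − (11/24)ω²h² + ω⁴h⁴/48, −mω²h(1 − ω²h²/12)(1 − ω²h²/24)], [(h/m)(1 − ω²h²/8), 1 − (11/24)ω²h² + ω⁴h⁴/48]] has determinant 1; in particular the symplectic Simpson scheme (p, q) ↦ Φ₃·(p, q)ᵗ is symplectic. -/

import Mathlib

/-- The matrix Φ₃ of the symplectic Simpson scheme has determinant one:
the scheme is symplectic. -/
theorem simpson_scheme_det_one
    (m ω h : ℝ) (hm : m ≠ 0) (hω : 0 < ω) (hh : 0 < h)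
    (hstab : ω ^ 2 * h ^ 2 ≠ 8) :
    ((1 / (1 + ω ^ 2 * h ^ 2 / 24)) •
        !![1 - (11 / 24) * ω ^ 2 * h ^ 2 + ω ^ 4 * h ^ 4 / 48,
             -(m * ω ^ 2 * h) * (1 - ω ^ 2 * h ^ 2 / 12) * (1 - ω ^ 2 * h ^ 2 / 24);
           (h / m) * (1 - ω ^ 2 * h ^ 2 / 8),
             1 - (11 / 24) * ω ^ 2 * h ^ 2 + ω ^ 4 * h ^ 4 / 48]).det = 1 := by
  have hx : (0:ℝ) < 1 + ω ^ 2 * h ^ 2 / 24 := by positivity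
  have hx' : (1:ℝ) + ω ^ 2 * h ^ 2 / 24 ≠ 0 := ne_of_gt hx
  simp only [Matrix.det_fin_two_of, Matrix.smul_apply, Matrix.of_apply, smul_eq_mul,
    Matrix.det_smul, Matrix.det_fin_two, Fintype.card_fin, Matrix.cons_val_zero,
    Matrix.cons_val_one, Matrix.head_cons]
  field_simp
  ring
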